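/- Let k ≥ 7, r ≥ 1 and α be integers with 1 ≤ α ≤ kr − 2, and let m ∈ [1,k] be the integer such that (m−1)r ≤ α < mr. Let A = {a_1 < a_2 < ⋯ < a_k} be a set of k positive integers. If |Σ_α(𝔸)| = r·k·(k+1)/2 − r·m·(m+1)/2 + m·(mr − α) + 1, where 𝔸 = (a_1,…,a_k)_r, then A = d∗[1,k] for some positive integer d. -/

import Mathlib

/-- The set `Σ_α(𝔸)` of sums of subsequences with at least `α` terms of the sequence
in which every element of `A` is repeated exactly `r` times. -/
def SubseqSums (r : ℕ) (A : Finset ℤ) (α : ℕ) : Set ℤ :=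
  {x | ∃ lam : ℤ → ℕ, (∀ a, lam a ≤ r) ∧ (∀ a ∉ A, lam a = 0) ∧
    α ≤ (∑ a ∈ A, lam a) ∧ (∑ a ∈ A, (lam a : ℤ) * a) = x}

namespace Stmt19

open Finset

variable {k : ℕ}


/-- feasible multiplicity vectors: entries at most `r`, total at most `β`. -/
def Feas (r β : ℕ) (μ : Fin k → ℕ) : Prop := (∀ i, μ i ≤ r) ∧ ∑ i, μ i ≤ β

/-- value of a multiplicity vector -/
def Vb (b : Fin k → ℤ) (μ : Fin k → ℕ) : ℤ := ∑ i, (μ i : ℤ) * b i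

/-- model value (value when `b i = i+1`). -/
def Mo (μ : Fin k → ℕ) : ℕ := ∑ i, μ i * ((i : ℕ) + 1)

/-- the finite set of all values of feasible vectors -/
def Tfin (r β : ℕ) (b : Fin k → ℤ) : Finset ℤ :=
  ((Finset.univ : Finset (Fin k → Fin (r+1))).filter (fun g => ∑ i, ((g i : ℕ)) ≤ β)).image
    (fun g => ∑ i, ((g i : ℕ) : ℤ) * b i)

lemma mem_Tfin {r β : ℕ} {b : Fin k → ℤ} {μ : Fin k → ℕ} (hμ : Feas r β μ) :
    Vb b μ ∈ Tfin r β b := by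
  refine Finset.mem_image.2 ⟨fun i => ⟨μ i, Nat.lt_succ_of_le (hμ.1 i)⟩, ?_, rfl⟩
  simpa using hμ.2

lemma Tfin_mem {r β : ℕ} {b : Fin k → ℤ} {x : ℤ} (hx : x ∈ Tfin r β b) :
    ∃ μ, Feas r β μ ∧ Vb b μ = x := by
  obtain ⟨g, hg, rfl⟩ := Finset.mem_image.1 hx
  exact ⟨fun i => (g i : ℕ), ⟨fun i => Nat.lt_succ_iff.1 (g i).2, by simpa using (Finset.mem_filter.1 hg).2⟩, rfl⟩

/-- one-point comparison of sums -/
lemma onePoint {M : Type*} [AddCommMonoid M] (f g : Fin k → M) (p : Fin k)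
    (h : ∀ j, j ≠ p → f j = g j) : f p + ∑ j, g j = g p + ∑ j, f j := by
  rw [← Finset.add_sum_erase _ g (mem_univ p), ← Finset.add_sum_erase _ f (mem_univ p)]
  have : ∑ j ∈ univ.erase p, g j = ∑ j ∈ univ.erase p, f j :=
    Finset.sum_congr rfl (fun j hj => (h j (Finset.mem_erase.1 hj).1).symm)
  rw [this]
  rw [add_left_comm]

/-- two-point comparison of sums -/
lemma twoPoint {M : Type*} [AddCommMonoid M] (f g : Fin k → M) (p q : Fin k) (hpq : p ≠ q)
    (h : ∀ j, j ≠ p → j ≠ q → f j = g j) :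
    f p + f q + ∑ j, g j = g p + g q + ∑ j, f j := by
  have hq : q ∈ univ.erase p := Finset.mem_erase.2 ⟨Ne.symm hpq, mem_univ q⟩
  rw [← Finset.add_sum_erase _ g (mem_univ p), ← Finset.add_sum_erase _ g hq,
      ← Finset.add_sum_erase _ f (mem_univ p), ← Finset.add_sum_erase _ f hq]
  have : ∑ j ∈ (univ.erase p).erase q, g j = ∑ j ∈ (univ.erase p).erase q, f j := by
    refine Finset.sum_congr rfl (fun j hj => ?_)
    have h1 := Finset.mem_erase.1 hj
    have h2 := Finset.mem_erase.1 h1.2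
    exact (h j h2.1 h1.1).symm
  rw [this]; abel


/-- the extremal (top-heavy) vector -/
def lamStar (r c t0 : ℕ) : Fin k → ℕ := fun i =>
  if (i : ℕ) < t0 then 0 else if (i : ℕ) = t0 then c else r

lemma sum_lamStar {r : ℕ} (c t0 : ℕ) (ht0 : t0 < k) :
    ∑ i, (lamStar r c t0 : Fin k → ℕ) i = c + (k - 1 - t0) * r := by
  have h1 : ∑ i : Fin k, lamStar r c t0 i
      = ∑ n ∈ range k, (if n < t0 then 0 else if n = t0 then c else r) :=
    Fin.sum_univ_eq_sum_range (fun n => if n < t0 then 0 else if n = t0 then c else r) k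
  rw [h1, range_eq_Ico, ← Finset.sum_Ico_consecutive _ (Nat.zero_le t0) (le_of_lt ht0)]
  have h2 : ∑ n ∈ Ico 0 t0, (if n < t0 then 0 else if n = t0 then c else r) = 0 :=
    Finset.sum_eq_zero (fun n hn => by rw [if_pos (Finset.mem_Ico.1 hn).2])
  rw [h2, Finset.sum_eq_sum_Ico_succ_bot ht0, if_neg (lt_irrefl t0), if_pos rfl]
  have h3 : ∑ n ∈ Ico (t0+1) k, (if n < t0 then 0 else if n = t0 then c else r)
      = ∑ n ∈ Ico (t0+1) k, r := by
    refine Finset.sum_congr rfl (fun n hn => ?_)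
    have := (Finset.mem_Ico.1 hn).1
    rw [if_neg (by omega), if_neg (by omega)]
  rw [h3, Finset.sum_const, Nat.card_Ico, smul_eq_mul]
  have : k - (t0 + 1) = k - 1 - t0 := by omega
  rw [this]; omega

lemma Mo_lamStar {r : ℕ} (c t0 : ℕ) (ht0 : t0 < k) :
    Mo (lamStar r c t0 : Fin k → ℕ) = c * (t0 + 1) + r * (∑ n ∈ Ico (t0+1) k, (n+1)) := by
  have h1 : Mo (lamStar r c t0 : Fin k → ℕ)
      = ∑ n ∈ range k, (if n < t0 then 0 else if n = t0 then c else r) * (n + 1) :=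
    Fin.sum_univ_eq_sum_range (fun n => (if n < t0 then 0 else if n = t0 then c else r) * (n+1)) k
  rw [h1, range_eq_Ico, ← Finset.sum_Ico_consecutive _ (Nat.zero_le t0) (le_of_lt ht0)]
  have h2 : ∑ n ∈ Ico 0 t0, (if n < t0 then 0 else if n = t0 then c else r) * (n+1) = 0 :=
    Finset.sum_eq_zero (fun n hn => by rw [if_pos (Finset.mem_Ico.1 hn).2]; ring)
  rw [h2, Finset.sum_eq_sum_Ico_succ_bot ht0, if_neg (lt_irrefl t0), if_pos rfl]
  have h3 : ∑ n ∈ Ico (t0+1) k, (if n < t0 then 0 else if n = t0 then c else r) * (n+1)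
      = ∑ n ∈ Ico (t0+1) k, r * (n+1) := by
    refine Finset.sum_congr rfl (fun n hn => ?_)
    have := (Finset.mem_Ico.1 hn).1
    rw [if_neg (by omega), if_neg (by omega)]
  rw [h3, ← Finset.mul_sum]
  omega

lemma Mo_le {r β : ℕ} {μ : Fin k → ℕ} (hμ : Feas r β μ) : Mo μ ≤ k * (r * k) := by
  have : Mo μ ≤ ∑ _i : Fin k, r * k :=
    Finset.sum_le_sum (fun i _ => Nat.mul_le_mul (hμ.1 i) (by have := i.isLt; omega))
  simpa using this

def sing (p : Fin k) : Fin k → ℕ := fun i => if i = p then 1 else 0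
def pairv (p q : Fin k) : Fin k → ℕ := fun i => sing p i + sing q i

lemma sum_sing (p : Fin k) : ∑ i, sing p i = 1 := by
  simp [sing, Finset.sum_ite_eq']

lemma Mo_sing (p : Fin k) : Mo (sing p) = (p : ℕ) + 1 := by
  unfold Mo sing
  have h : ∀ i : Fin k, (if i = p then 1 else 0) * ((i : ℕ) + 1)
      = if i = p then (i : ℕ) + 1 else 0 := fun i => by split <;> simp
  rw [Finset.sum_congr rfl (fun i _ => h i)]
  simp [Finset.sum_ite_eq']

lemma Vb_sing (b : Fin k → ℤ) (p : Fin k) : Vb b (sing p) = b p := by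
  unfold Vb sing
  have h : ∀ i : Fin k, (((if i = p then 1 else 0 : ℕ)) : ℤ) * b i
      = if i = p then b i else 0 := fun i => by split <;> simp
  rw [Finset.sum_congr rfl (fun i _ => h i)]
  simp [Finset.sum_ite_eq']

lemma sum_pairv (p q : Fin k) : ∑ i, pairv p q i = 2 := by
  unfold pairv; rw [Finset.sum_add_distrib, sum_sing, sum_sing]

lemma Mo_pairv (p q : Fin k) : Mo (pairv p q) = ((p : ℕ) + 1) + ((q : ℕ) + 1) := by
  unfold Mo pairv
  have : ∀ i : Fin k, (sing p i + sing q i) * ((i : ℕ) + 1)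
      = sing p i * ((i : ℕ) + 1) + sing q i * ((i : ℕ) + 1) := fun i => by ring
  rw [Finset.sum_congr rfl (fun i _ => this i), Finset.sum_add_distrib]
  have h1 := Mo_sing p
  have h2 := Mo_sing q
  unfold Mo at h1 h2
  omega

lemma Vb_pairv (b : Fin k → ℤ) (p q : Fin k) : Vb b (pairv p q) = b p + b q := by
  unfold Vb pairv
  have : ∀ i : Fin k, ((sing p i + sing q i : ℕ) : ℤ) * b i
      = (sing p i : ℤ) * b i + (sing q i : ℤ) * b i := fun i => by push_cast; ring
  rw [Finset.sum_congr rfl (fun i _ => this i), Finset.sum_add_distrib]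
  have h1 := Vb_sing b p
  have h2 := Vb_sing b q
  unfold Vb at h1 h2
  rw [h1, h2]

lemma feas_sing {r β : ℕ} (hr : 1 ≤ r) (hβ : 1 ≤ β) (p : Fin k) : Feas r β (sing p) := by
  refine ⟨fun i => ?_, by rw [sum_sing]; omega⟩
  unfold sing; split <;> omega

lemma feas_pairv {r β : ℕ} (hr : 1 ≤ r) (hβ : 2 ≤ β) (p q : Fin k) (hpq : p ≠ q) :
    Feas r β (pairv p q) := by
  refine ⟨fun i => ?_, by rw [sum_pairv]; omega⟩
  unfold pairv sing
  by_cases h1 : i = p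
  · subst h1; rw [if_pos rfl, if_neg hpq]; omega
  · rw [if_neg h1]
    by_cases h2 : i = q
    · subst h2; rw [if_pos rfl]; omega
    · rw [if_neg h2]; omega

lemma B_ge_k {r : ℕ} (hr : 1 ≤ r) {t0 c : ℕ} (ht0 : t0 < k) (hc1 : 1 ≤ c) :
    k ≤ Mo (lamStar r c t0 : Fin k → ℕ) := by
  have hk0 : 0 < k := lt_of_le_of_lt (Nat.zero_le t0) ht0
  set p : Fin k := ⟨k - 1, by omega⟩ with hp
  have hterm : k ≤ lamStar r c t0 p * ((p : ℕ) + 1) := by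
    unfold lamStar
    have hpv : (p : ℕ) = k - 1 := rfl
    rw [hpv]
    have h1 : ¬ (k - 1 < t0) := by omega
    rw [if_neg h1]
    by_cases h2 : k - 1 = t0
    · rw [if_pos h2]
      have : k - 1 + 1 = k := by omega
      rw [this]
      calc k = 1 * k := (one_mul k).symm
      _ ≤ c * k := Nat.mul_le_mul_right k hc1
    · rw [if_neg h2]
      have : k - 1 + 1 = k := by omega
      rw [this]
      calc k = 1 * k := (one_mul k).symm
      _ ≤ r * k := Nat.mul_le_mul_right k hr
  unfold Mo
  calc k ≤ lamStar r c t0 p * ((p : ℕ) + 1) := hterm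
  _ ≤ ∑ i, lamStar r c t0 i * ((i : ℕ) + 1) :=
      Finset.single_le_sum (f := fun i => lamStar r c t0 i * ((i : ℕ) + 1))
        (fun i _ => Nat.zero_le _) (mem_univ p)

/-- decrement at a point `p` with `μ p ≠ 0`: all three sums -/
lemma decStep {r β : ℕ} {b : Fin k → ℤ} (hbpos : ∀ i, 0 < b i) {μ : Fin k → ℕ}
    (hμ : Feas r β μ) (p : Fin k) (hp : μ p ≠ 0) :
    ∃ μ', Feas r β μ' ∧ Mo μ' + ((p : ℕ) + 1) = Mo μ ∧ Vb b μ' = Vb b μ - b p := by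
  classical
  set μ' : Fin k → ℕ := fun j => if j = p then μ p - 1 else μ j with hμ'
  have hμ'p : μ' p = μ p - 1 := by simp [hμ']
  have hμ'o : ∀ j, j ≠ p → μ' j = μ j := by intro j hj; simp [hμ', hj]
  have h1 : 1 ≤ μ p := Nat.one_le_iff_ne_zero.2 hp
  refine ⟨μ', ⟨fun i => ?_, ?_⟩, ?_, ?_⟩
  · by_cases hip : i = p
    · subst hip; rw [hμ'p]; exact le_trans (Nat.sub_le _ _) (hμ.1 i)
    · rw [hμ'o i hip]; exact hμ.1 i
  · refine le_trans (Finset.sum_le_sum (fun i _ => ?_)) hμ.2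
    by_cases hip : i = p
    · subst hip; rw [hμ'p]; exact Nat.sub_le _ _
    · rw [hμ'o i hip]
  · have := onePoint (fun j => μ' j * ((j : ℕ) + 1)) (fun j => μ j * ((j : ℕ) + 1)) p
      (fun j hj => by rw [hμ'o j hj])
    simp only [hμ'p] at this
    obtain ⟨t, ht⟩ : ∃ t, μ p = t + 1 := ⟨μ p - 1, by omega⟩
    rw [ht] at this
    simp only [Nat.add_sub_cancel] at this
    have e1 : (t + 1) * ((p : ℕ) + 1) = t * ((p : ℕ) + 1) + ((p : ℕ) + 1) := by ring
    show Mo μ' + ((p : ℕ) + 1) = Mo μ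
    unfold Mo
    linarith [this, e1]
  · have := onePoint (fun j => (μ' j : ℤ) * b j) (fun j => (μ j : ℤ) * b j) p
      (fun j hj => by rw [hμ'o j hj])
    simp only [hμ'p] at this
    have e1 : ((μ p - 1 : ℕ) : ℤ) = (μ p : ℤ) - 1 := by
      have := h1; push_cast [Nat.cast_sub this]; ring
    rw [e1] at this
    show Vb b μ' = Vb b μ - b p
    unfold Vb
    linarith [this]

/-- increment at a point `p` -/
lemma incStep {r β : ℕ} (b : Fin k → ℤ) {μ : Fin k → ℕ}
    (hμ : Feas r β μ) (p : Fin k) (hp : μ p < r) (hs : ∑ i, μ i < β) :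
    ∃ μ', Feas r β μ' ∧ Mo μ' = Mo μ + ((p : ℕ) + 1) ∧ Vb b μ' = Vb b μ + b p := by
  classical
  set μ' : Fin k → ℕ := fun j => if j = p then μ p + 1 else μ j with hμ'
  have hμ'p : μ' p = μ p + 1 := by simp [hμ']
  have hμ'o : ∀ j, j ≠ p → μ' j = μ j := by intro j hj; simp [hμ', hj]
  have hsum : ∑ i, μ' i = (∑ i, μ i) + 1 := by
    have := onePoint μ' μ p hμ'o
    rw [hμ'p] at this; omega
  refine ⟨μ', ⟨fun i => ?_, by omega⟩, ?_, ?_⟩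
  · by_cases hip : i = p
    · subst hip; rw [hμ'p]; omega
    · rw [hμ'o i hip]; exact hμ.1 i
  · have := onePoint (fun j => μ' j * ((j : ℕ) + 1)) (fun j => μ j * ((j : ℕ) + 1)) p
      (fun j hj => by rw [hμ'o j hj])
    simp only [hμ'p] at this
    have e1 : (μ p + 1) * ((p : ℕ) + 1) = μ p * ((p : ℕ) + 1) + ((p : ℕ) + 1) := by ring
    show Mo μ' = Mo μ + ((p : ℕ) + 1)
    unfold Mo; linarith [this, e1]
  · have := onePoint (fun j => (μ' j : ℤ) * b j) (fun j => (μ j : ℤ) * b j) p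
      (fun j hj => by rw [hμ'o j hj])
    simp only [hμ'p] at this
    push_cast at this
    show Vb b μ' = Vb b μ + b p
    unfold Vb; linarith [this]

/-- move a unit from `p` to `q` -/
lemma shiftStep {r β : ℕ} (b : Fin k → ℤ) {μ : Fin k → ℕ}
    (hμ : Feas r β μ) (p q : Fin k) (hpq : p ≠ q) (hp : μ p ≠ 0) (hq : μ q < r) :
    ∃ μ', Feas r β μ' ∧ Mo μ' + ((p : ℕ) + 1) = Mo μ + ((q : ℕ) + 1) ∧
      Vb b μ' = Vb b μ - b p + b q := by
  classical
  set μ' : Fin k → ℕ := fun j => if j = p then μ p - 1 else if j = q then μ q + 1 else μ j with hμ'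
  have hμ'p : μ' p = μ p - 1 := by simp [hμ']
  have hμ'q : μ' q = μ q + 1 := by simp [hμ', Ne.symm hpq]
  have hμ'o : ∀ j, j ≠ p → j ≠ q → μ' j = μ j := by intro j hj1 hj2; simp [hμ', hj1, hj2]
  have h1 : 1 ≤ μ p := Nat.one_le_iff_ne_zero.2 hp
  obtain ⟨t, ht⟩ : ∃ t, μ p = t + 1 := ⟨μ p - 1, by omega⟩
  have hsum : ∑ i, μ' i = ∑ i, μ i := by
    have := twoPoint μ' μ p q hpq hμ'o
    rw [hμ'p, hμ'q] at this; omega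
  have hμ2 := hμ.2
  refine ⟨μ', ⟨fun i => ?_, by omega⟩, ?_, ?_⟩
  · by_cases hip : i = p
    · subst hip; rw [hμ'p]; exact le_trans (Nat.sub_le _ _) (hμ.1 i)
    · by_cases hiq : i = q
      · subst hiq; rw [hμ'q]; omega
      · rw [hμ'o i hip hiq]; exact hμ.1 i
  · have := twoPoint (fun j => μ' j * ((j : ℕ) + 1)) (fun j => μ j * ((j : ℕ) + 1)) p q hpq
      (fun j hj1 hj2 => by rw [hμ'o j hj1 hj2])
    simp only [hμ'p, hμ'q, ht, Nat.add_sub_cancel] at this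
    have e1 : (t + 1) * ((p : ℕ) + 1) = t * ((p : ℕ) + 1) + ((p : ℕ) + 1) := by ring
    have e2 : (μ q + 1) * ((q : ℕ) + 1) = μ q * ((q : ℕ) + 1) + ((q : ℕ) + 1) := by ring
    show Mo μ' + ((p : ℕ) + 1) = Mo μ + ((q : ℕ) + 1)
    unfold Mo; linarith [this, e1, e2]
  · have := twoPoint (fun j => (μ' j : ℤ) * b j) (fun j => (μ j : ℤ) * b j) p q hpq
      (fun j hj1 hj2 => by rw [hμ'o j hj1 hj2])
    simp only [hμ'p, hμ'q, ht, Nat.add_sub_cancel] at this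
    push_cast at this
    show Vb b μ' = Vb b μ - b p + b q
    unfold Vb; linarith [this]

lemma predLemma {r β : ℕ} {b : Fin k → ℤ} (hb : StrictMono b) (hbpos : ∀ i, 0 < b i)
    (hr : 1 ≤ r) {μ : Fin k → ℕ} (hμ : Feas r β μ) (h0 : 0 < Mo μ) :
    ∃ μ', Feas r β μ' ∧ Mo μ' + 1 = Mo μ ∧ Vb b μ' < Vb b μ := by
  classical
  have hex : ∃ t, μ t ≠ 0 := by
    by_contra h; push_neg at h
    have : Mo μ = 0 := Finset.sum_eq_zero (fun i _ => by rw [h i]; ring)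
    omega
  obtain ⟨t, ht⟩ := hex
  by_cases hS : ∃ i, i < t ∧ μ i < r
  · set S := univ.filter (fun i => i < t ∧ μ i < r) with hSdef
    have hSne : S.Nonempty := by
      obtain ⟨i, hi⟩ := hS; exact ⟨i, Finset.mem_filter.2 ⟨mem_univ i, hi⟩⟩
    set q := S.max' hSne with hqdef
    have hqmem := Finset.mem_filter.1 (S.max'_mem hSne)
    have hqt : q < t := hqmem.2.1
    have hqr : μ q < r := hqmem.2.2
    have hq1k : (q : ℕ) + 1 < k := by
      have : (q : ℕ) < (t : ℕ) := hqt
      omega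
    set p : Fin k := ⟨(q : ℕ) + 1, hq1k⟩ with hpdef
    have hpq : p ≠ q := by
      intro h; have := congrArg Fin.val h; simp [hpdef] at this
    have hpne : μ p ≠ 0 := by
      rcases eq_or_ne p t with h | h
      · rw [h]; exact ht
      · have hpt : p < t := by
          have h1 : (p : ℕ) ≤ (t : ℕ) := by
            have : (q : ℕ) < (t : ℕ) := hqt; simp [hpdef]; omega
          have h2 : (p : ℕ) ≠ (t : ℕ) := fun hc => h (Fin.ext hc)
          exact Fin.lt_def.2 (by omega)
        intro hc
        have hpr : μ p < r := by omega
        have : p ∈ S := Finset.mem_filter.2 ⟨mem_univ p, hpt, hpr⟩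
        have := S.le_max' p this
        rw [← hqdef] at this
        have : (p : ℕ) ≤ (q : ℕ) := this
        simp [hpdef] at this
    obtain ⟨μ', hf, hmo, hv⟩ := shiftStep b hμ p q hpq hpne hqr
    refine ⟨μ', hf, by simp [hpdef] at hmo ⊢; omega, ?_⟩
    have : b q < b p := hb (by simp [hpdef, Fin.lt_def])
    rw [hv]; linarith
  · push_neg at hS
    have hk0 : 0 < k := t.pos
    set z : Fin k := ⟨0, hk0⟩ with hzdef
    have hz : μ z ≠ 0 := by
      rcases eq_or_ne t z with h | h
      · rw [← h]; exact ht
      · have hzt : z < t := by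
          have : (t : ℕ) ≠ 0 := fun hc => h (Fin.ext hc)
          exact Fin.lt_def.2 (by simp [hzdef]; omega)
        have := hS z hzt
        omega
    obtain ⟨μ', hf, hmo, hv⟩ := decStep hbpos hμ z hz
    refine ⟨μ', hf, by simpa [hzdef] using hmo, ?_⟩
    rw [hv]; have := hbpos z; linarith

lemma succLemma {r β : ℕ} {b : Fin k → ℤ} (hb : StrictMono b) (hbpos : ∀ i, 0 < b i)
    (hr : 1 ≤ r) (hβ2 : 2 ≤ β) (hβlt : β < k * r) {t0 c : ℕ} (ht0 : t0 < k)
    (hc1 : 1 ≤ c) (hcr : c ≤ r) (hcβ : c + (k - 1 - t0) * r = β)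
    {μ : Fin k → ℕ} (hμ : Feas r β μ) (hne : μ ≠ lamStar r c t0) :
    ∃ μ', Feas r β μ' ∧ Mo μ' = Mo μ + 1 ∧ Vb b μ < Vb b μ' := by
  classical
  have hk0 : 0 < k := lt_of_le_of_lt (Nat.zero_le t0) ht0
  by_cases hshift : ∃ p : Fin k, ∃ h : (p : ℕ) + 1 < k, μ p ≠ 0 ∧ μ ⟨(p : ℕ) + 1, h⟩ < r
  · obtain ⟨p, h, hp0, hpr⟩ := hshift
    set q : Fin k := ⟨(p : ℕ) + 1, h⟩ with hqdef
    have hpq : p ≠ q := by intro hc; have := congrArg Fin.val hc; simp [hqdef] at this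
    obtain ⟨μ', hf, hmo, hv⟩ := shiftStep b hμ p q hpq hp0 hpr
    refine ⟨μ', hf, by simp [hqdef] at hmo ⊢; omega, ?_⟩
    have : b p < b q := hb (by simp [hqdef, Fin.lt_def])
    rw [hv]; linarith
  · push_neg at hshift
    by_cases hadd : μ ⟨0, hk0⟩ < r ∧ ∑ i, μ i < β
    · obtain ⟨μ', hf, hmo, hv⟩ := incStep b hμ ⟨0, hk0⟩ hadd.1 hadd.2
      refine ⟨μ', hf, by simpa using hmo, ?_⟩
      rw [hv]; have := hbpos ⟨0, hk0⟩; linarith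
    · exfalso
      have hcase : μ ⟨0, hk0⟩ < r := by
        by_contra hge
        have h0r : μ ⟨0, hk0⟩ = r := le_antisymm (hμ.1 _) (by omega)
        have hall : ∀ n (hn : n < k), μ ⟨n, hn⟩ = r := by
          intro n
          induction n with
          | zero => intro hn; exact h0r
          | succ n ih =>
            intro hn
            have hn' : n < k := by omega
            have hprev : μ ⟨n, hn'⟩ = r := ih hn'
            have := hshift ⟨n, hn'⟩ hn (by rw [hprev]; omega)
            exact le_antisymm (hμ.1 _) (by simpa using this)
        have hsum : ∑ i, μ i = k * r := by
          have : ∀ i : Fin k, μ i = r := fun i => by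
            have := hall i.val i.isLt; simpa [Fin.eta] using this
          rw [Finset.sum_congr rfl (fun i _ => this i)]
          simp [mul_comm]
        have := hμ.2; omega
      have hS : ∑ i, μ i = β := by
        have h1 := hμ.2
        have h2 : ¬ (∑ i, μ i < β) := fun hc => hadd ⟨hcase, hc⟩
        omega
      have hμne : ∃ i, μ i ≠ 0 := by
        by_contra h; push_neg at h
        have : ∑ i, μ i = 0 := Finset.sum_eq_zero (fun i _ => h i)
        omega
      set F := univ.filter (fun i => μ i ≠ 0) with hFdef
      have hFne : F.Nonempty := by
        obtain ⟨i, hi⟩ := hμne; exact ⟨i, Finset.mem_filter.2 ⟨mem_univ i, hi⟩⟩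
      set t1 := F.min' hFne with ht1def
      have ht1 : μ t1 ≠ 0 := (Finset.mem_filter.1 (F.min'_mem hFne)).2
      have hlow : ∀ j, j < t1 → μ j = 0 := by
        intro j hj
        by_contra hc
        have : j ∈ F := Finset.mem_filter.2 ⟨mem_univ j, hc⟩
        have := F.min'_le j this
        rw [← ht1def] at this
        exact absurd hj (not_lt.2 this)
      have hclimb : ∀ n (hn : n < k), (t1 : ℕ) < n → μ ⟨n, hn⟩ = r := by
        intro n
        induction n with
        | zero => intro _ h; omega
        | succ n ih =>
          intro hn hlt
          have hn' : n < k := by omega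
          have hne0 : μ ⟨n, hn'⟩ ≠ 0 := by
            rcases Nat.lt_or_ge (t1 : ℕ) n with h | h
            · rw [ih hn' h]; omega
            · have : (t1 : ℕ) = n := by omega
              have : t1 = (⟨n, hn'⟩ : Fin k) := Fin.ext this
              rw [← this]; exact ht1
          have := hshift ⟨n, hn'⟩ hn hne0
          exact le_antisymm (hμ.1 _) (by simpa using this)
      have hshape : μ = lamStar r (μ t1) (t1 : ℕ) := by
        funext j
        unfold lamStar
        rcases Nat.lt_trichotomy (j : ℕ) (t1 : ℕ) with h | h | h
        · rw [if_pos h]; exact hlow j (Fin.lt_def.2 h)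
        · rw [if_neg (by omega), if_pos h]
          congr 1; exact Fin.ext h
        · rw [if_neg (by omega), if_neg (by omega)]
          have := hclimb (j : ℕ) j.isLt h
          simpa [Fin.eta] using this
      -- totals agree
      have hsum1 : μ t1 + (k - 1 - (t1 : ℕ)) * r = β := by
        rw [hshape] at hS
        rw [← hS]
        exact (sum_lamStar (μ t1) (t1 : ℕ) t1.isLt).symm
      have hb1 : 1 ≤ μ t1 := Nat.one_le_iff_ne_zero.2 ht1
      have hbr : μ t1 ≤ r := hμ.1 t1
      -- uniqueness of the representation
      have huv : k - 1 - (t1 : ℕ) = k - 1 - t0 := by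
        set u := k - 1 - (t1 : ℕ) with hu
        set v := k - 1 - t0 with hv
        rcases Nat.lt_trichotomy u v with h | h | h
        · have h1 : u * r + r ≤ v * r := by
            calc u * r + r = (u + 1) * r := by ring
            _ ≤ v * r := Nat.mul_le_mul_right r (by omega)
          linarith [hsum1, hcβ, hb1, hbr, hc1, hcr, h1]
        · exact h
        · have h1 : v * r + r ≤ u * r := by
            calc v * r + r = (v + 1) * r := by ring
            _ ≤ u * r := Nat.mul_le_mul_right r (by omega)
          linarith [hsum1, hcβ, hb1, hbr, hc1, hcr, h1]
      have ht1t0 : (t1 : ℕ) = t0 := by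
        have h1 := t1.isLt
        omega
      have hct1 : μ t1 = c := by
        rw [huv] at hsum1
        have : μ t1 + (k - 1 - t0) * r = c + (k - 1 - t0) * r := by rw [hsum1, hcβ]
        exact Nat.add_right_cancel this
      apply hne
      rw [hshape, hct1, ht1t0]

lemma chainLow {r β : ℕ} {b : Fin k → ℤ} (hb : StrictMono b) (hbpos : ∀ i, 0 < b i)
    (hr : 1 ≤ r) : ∀ n (μ : Fin k → ℕ), Feas r β μ → Mo μ ≤ n →
    ∃ S : Finset ℤ, S ⊆ Tfin r β b ∧ Mo μ + 1 ≤ S.card ∧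
      (∀ x ∈ S, x ≤ Vb b μ) ∧ Vb b μ ∈ S := by
  intro n
  induction n with
  | zero =>
    intro μ hμ h0
    exact ⟨{Vb b μ}, by simpa using mem_Tfin hμ, by simp; omega,
      by simp, by simp⟩
  | succ n ih =>
    intro μ hμ hle
    by_cases h0 : Mo μ = 0
    · exact ⟨{Vb b μ}, by simpa using mem_Tfin hμ, by simp; omega, by simp, by simp⟩
    · obtain ⟨μ', hf, hmo, hv⟩ := predLemma hb hbpos hr hμ (by omega)
      obtain ⟨S, hsub, hcard, hbd, hmem⟩ := ih μ' hf (by omega)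
      refine ⟨insert (Vb b μ) S, ?_, ?_, ?_, ?_⟩
      · exact Finset.insert_subset (mem_Tfin hμ) hsub
      · have hnm : Vb b μ ∉ S := fun hc => absurd (hbd _ hc) (by linarith)
        rw [Finset.card_insert_of_notMem hnm]; omega
      · intro x hx
        rcases Finset.mem_insert.1 hx with h | h
        · rw [h]
        · linarith [hbd x h]
      · exact Finset.mem_insert_self _ _

lemma chainHigh {r β : ℕ} {b : Fin k → ℤ} (hb : StrictMono b) (hbpos : ∀ i, 0 < b i)
    (hr : 1 ≤ r) (hβ2 : 2 ≤ β) (hβlt : β < k * r) {t0 c : ℕ} (ht0 : t0 < k)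
    (hc1 : 1 ≤ c) (hcr : c ≤ r) (hcβ : c + (k - 1 - t0) * r = β) :
    ∀ n (μ : Fin k → ℕ), Feas r β μ → k * (r * k) + 1 - Mo μ ≤ n →
    ∃ S : Finset ℤ, S ⊆ Tfin r β b ∧ Mo (lamStar r c t0 : Fin k → ℕ) - Mo μ + 1 ≤ S.card ∧
      (∀ x ∈ S, Vb b μ ≤ x) ∧ Vb b μ ∈ S := by
  classical
  intro n
  induction n with
  | zero =>
    intro μ hμ h0
    have := Mo_le hμ
    omega
  | succ n ih =>
    intro μ hμ hle
    by_cases hls : μ = lamStar r c t0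
    · refine ⟨{Vb b μ}, by simpa using mem_Tfin hμ, ?_, by simp, by simp⟩
      rw [hls]; simp
    · obtain ⟨μ', hf, hmo, hv⟩ := succLemma hb hbpos hr hβ2 hβlt ht0 hc1 hcr hcβ hμ hls
      have hb2 := Mo_le hf
      obtain ⟨S, hsub, hcard, hbd, hmem⟩ := ih μ' hf (by omega)
      refine ⟨insert (Vb b μ) S, ?_, ?_, ?_, ?_⟩
      · exact Finset.insert_subset (mem_Tfin hμ) hsub
      · have hnm : Vb b μ ∉ S := fun hc => absurd (hbd _ hc) (by linarith)
        rw [Finset.card_insert_of_notMem hnm]; omega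
      · intro x hx
        rcases Finset.mem_insert.1 hx with h | h
        · rw [h]
        · linarith [hbd x h]
      · exact Finset.mem_insert_self _ _

/-- rigidity: when `Tfin` has the minimal size `B + 1`, the value depends only on the
model value. -/
lemma rigid {r β : ℕ} {b : Fin k → ℤ} (hb : StrictMono b) (hbpos : ∀ i, 0 < b i)
    (hr : 1 ≤ r) (hβ2 : 2 ≤ β) (hβlt : β < k * r) {t0 c : ℕ} (ht0 : t0 < k)
    (hc1 : 1 ≤ c) (hcr : c ≤ r) (hcβ : c + (k - 1 - t0) * r = β)
    (hcard : (Tfin r β b).card = Mo (lamStar r c t0 : Fin k → ℕ) + 1)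
    {μ ν : Fin k → ℕ} (hμ : Feas r β μ) (hν : Feas r β ν) (hmo : Mo μ = Mo ν)
    (hmoB : Mo μ ≤ Mo (lamStar r c t0 : Fin k → ℕ)) : Vb b μ = Vb b ν := by
  classical
  have key : ∀ (μ ν : Fin k → ℕ), Feas r β μ → Feas r β ν → Mo μ = Mo ν →
      Mo μ ≤ Mo (lamStar r c t0 : Fin k → ℕ) → ¬ (Vb b μ < Vb b ν) := by
    intro μ ν hμ hν hmo hmoB hlt
    obtain ⟨S1, hsub1, hcard1, hbd1, -⟩ := chainLow hb hbpos hr (Mo μ) μ hμ le_rfl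
    obtain ⟨S2, hsub2, hcard2, hbd2, -⟩ := chainHigh hb hbpos hr hβ2 hβlt ht0 hc1 hcr hcβ
      (k * (r * k) + 1) ν hν (by omega)
    have hdisj : Disjoint S1 S2 := by
      rw [Finset.disjoint_left]
      intro x hx1 hx2
      have := hbd1 x hx1
      have := hbd2 x hx2
      linarith
    have hle : (S1 ∪ S2).card ≤ (Tfin r β b).card :=
      Finset.card_le_card (Finset.union_subset hsub1 hsub2)
    rw [Finset.card_union_of_disjoint hdisj, hcard] at hle
    omega
  by_contra hne
  rcases Ne.lt_or_gt hne with h | h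
  · exact key μ ν hμ hν hmo hmoB h
  · exact key ν μ hν hμ hmo.symm (by omega) h

end Stmt19

open Finset Stmt19

theorem stmt_19 (k r α m : ℕ) (A : Finset ℤ)
    (hk : 7 ≤ k) (hr : 1 ≤ r) (hα1 : 1 ≤ α) (hαkr : α ≤ k * r - 2)
    (hm1 : 1 ≤ m) (hmk : m ≤ k) (hmα : (m - 1) * r ≤ α) (hαm : α < m * r)
    (hAcard : A.card = k) (hApos : ∀ a ∈ A, 0 < a)
    (heq : (SubseqSums r A α).ncard = r * k * (k + 1) / 2 - r * m * (m + 1) / 2 + m * (m * r - α) + 1) :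
    ∃ d : ℤ, 0 < d ∧ A = (Finset.Icc (1 : ℤ) (k : ℤ)).image (fun i => d * i) := by
  classical
  have hk0 : 0 < k := by omega
  have hkr : 7 ≤ k * r := by
    calc 7 ≤ k := hk
    _ = k * 1 := (mul_one k).symm
    _ ≤ k * r := Nat.mul_le_mul_left k hr
  have hb : StrictMono (fun i => (A.orderEmbOfFin hAcard) i : Fin k → ℤ) :=
    (A.orderEmbOfFin hAcard).strictMono
  set b : Fin k → ℤ := (fun i => (A.orderEmbOfFin hAcard) i) with hbdef
  have hbmem : ∀ i, b i ∈ A := fun i => A.orderEmbOfFin_mem hAcard i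
  have hbpos : ∀ i, 0 < b i := fun i => hApos _ (hbmem i)
  have hβ2 : 2 ≤ k * r - α := by omega
  have hβlt : k * r - α < k * r := by omega
  have ht0 : m - 1 < k := by omega
  have hcα : (m * r - α) + α = m * r := by omega
  have hc1 : 1 ≤ m * r - α := by omega
  have hmm : (m - 1) * r + r = m * r := by
    have h : m - 1 + 1 = m := by omega
    calc (m - 1) * r + r = ((m - 1) + 1) * r := by ring
    _ = m * r := by rw [h]
  have hcr : m * r - α ≤ r := by omega
  have hkm : (k - m) * r + m * r = k * r := by
    have h : k - m + m = k := by omega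
    calc (k - m) * r + m * r = ((k - m) + m) * r := by ring
    _ = k * r := by rw [h]
  have hcβ : (m * r - α) + (k - 1 - (m - 1)) * r = k * r - α := by
    have h3 : k - 1 - (m - 1) = k - m := by omega
    rw [h3]; omega
  -- the extremal model value
  have hG : Mo (lamStar r (m * r - α) (m - 1) : Fin k → ℕ)
      = (m * r - α) * m + r * (∑ n ∈ Ico m k, (n + 1)) := by
    have h := Mo_lamStar (r := r) (m * r - α) (m - 1) ht0
    have h1 : m - 1 + 1 = m := by omega
    rw [h1] at h
    exact h
  -- Gauss summation
  have hGauss : (m + 1) * m + 2 * (∑ n ∈ Ico m k, (n + 1)) = (k + 1) * k := by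
    have h4 : ∀ N : ℕ, ∑ i ∈ range N, (i + 1) = ∑ i ∈ range (N + 1), i := by
      intro N
      rw [Finset.sum_range_succ' (fun i => i) N]
      simp
    have h5 : (∑ i ∈ range m, (i + 1)) + (∑ n ∈ Ico m k, (n + 1)) = ∑ i ∈ range k, (i + 1) := by
      rw [range_eq_Ico, range_eq_Ico]
      exact Finset.sum_Ico_consecutive (fun i => i + 1) (Nat.zero_le m) hmk
    rw [h4 m, h4 k] at h5
    have g1 := Finset.sum_range_id_mul_two (m + 1)
    have g2 := Finset.sum_range_id_mul_two (k + 1)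
    simp only [Nat.add_sub_cancel] at g1 g2
    omega
  -- arithmetic identity
  have hmain : r * k * (k + 1) / 2 - r * m * (m + 1) / 2 + m * (m * r - α) + 1
      = Mo (lamStar r (m * r - α) (m - 1) : Fin k → ℕ) + 1 := by
    obtain ⟨u, hu⟩ := Nat.even_mul_succ_self m
    have hX : r * k * (k + 1) = 2 * (r * u) + 2 * (r * (∑ n ∈ Ico m k, (n + 1))) := by
      have h6 : k * (k + 1) = m * (m + 1) + 2 * (∑ n ∈ Ico m k, (n + 1)) := by
        have e1 : (m + 1) * m = m * (m + 1) := by ring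
        have e2 : (k + 1) * k = k * (k + 1) := by ring
        omega
      calc r * k * (k + 1) = r * (k * (k + 1)) := by ring
      _ = r * (m * (m + 1) + 2 * (∑ n ∈ Ico m k, (n + 1))) := by rw [h6]
      _ = r * ((u + u) + 2 * (∑ n ∈ Ico m k, (n + 1))) := by rw [← hu]
      _ = 2 * (r * u) + 2 * (r * (∑ n ∈ Ico m k, (n + 1))) := by ring
    have hY : r * m * (m + 1) = 2 * (r * u) := by
      calc r * m * (m + 1) = r * (m * (m + 1)) := by ring
      _ = r * (u + u) := by rw [← hu]
      _ = 2 * (r * u) := by ring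
    have hX2 : r * k * (k + 1) / 2 = r * u + r * (∑ n ∈ Ico m k, (n + 1)) := by
      omega
    have hY2 : r * m * (m + 1) / 2 = r * u := by omega
    rw [hX2, hY2, hG]
    have : m * (m * r - α) = (m * r - α) * m := by ring
    omega
  -- A as the image of b
  have hAimg : A = Finset.image b Finset.univ := by
    apply Finset.coe_injective
    rw [Finset.coe_image, Finset.coe_univ, Set.image_univ]
    exact (Finset.range_orderEmbOfFin A hAcard).symm
  have hAsumZ : ∀ f : ℤ → ℤ, ∑ a ∈ A, f a = ∑ i, f (b i) := by
    intro f
    conv_lhs => rw [hAimg]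
    rw [Finset.sum_image (fun x _ y _ h => hb.injective h)]
  have hAsumN : ∀ f : ℤ → ℕ, ∑ a ∈ A, f a = ∑ i, f (b i) := by
    intro f
    conv_lhs => rw [hAimg]
    rw [Finset.sum_image (fun x _ y _ h => hb.injective h)]
  set R : ℤ := ∑ a ∈ A, (r : ℤ) * a with hRdef
  have hset : SubseqSums r A α = (fun y => R - y) '' (↑(Tfin r (k * r - α) b) : Set ℤ) := by
    ext x
    simp only [SubseqSums, Set.mem_setOf_eq, Set.mem_image, Finset.mem_coe]
    constructor
    · rintro ⟨lam, hl1, hl2, hl3, hl4⟩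
      set μ : Fin k → ℕ := fun i => r - lam (b i) with hμdef
      have hfe : Feas r (k * r - α) μ := by
        constructor
        · intro i; simp only [hμdef]; omega
        · have h7 : ∑ i, μ i + ∑ i, lam (b i) = k * r := by
            rw [← Finset.sum_add_distrib]
            have he : ∀ i : Fin k, μ i + lam (b i) = r := fun i => by
              have := hl1 (b i); simp only [hμdef]; omega
            rw [Finset.sum_congr rfl (fun i _ => he i)]
            simp [mul_comm]
          have h8 : α ≤ ∑ i, lam (b i) := by rw [← hAsumN (fun a => lam a)]; exact hl3
          omega
      refine ⟨Vb b μ, mem_Tfin hfe, ?_⟩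
      have h10 : Vb b μ = R - x := by
        unfold Vb
        have he : ∀ i : Fin k, ((μ i : ℕ) : ℤ) * b i
            = (r : ℤ) * b i - (lam (b i) : ℤ) * b i := by
          intro i
          have h11 := hl1 (b i)
          have h12 : ((μ i : ℕ) : ℤ) = (r : ℤ) - (lam (b i) : ℤ) := by
            simp only [hμdef]
            push_cast [Nat.cast_sub h11]
            ring
          rw [h12]; ring
        rw [Finset.sum_congr rfl (fun i _ => he i), Finset.sum_sub_distrib]
        have h13 : R = ∑ i, (r : ℤ) * b i := hAsumZ (fun a => (r : ℤ) * a)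
        have h14 : x = ∑ i, (lam (b i) : ℤ) * b i := by
          rw [← hl4]; exact hAsumZ (fun a => (lam a : ℤ) * a)
        rw [← h13, ← h14]
      rw [h10]; ring
    · rintro ⟨y, hy, rfl⟩
      obtain ⟨μ, hfe, hV⟩ := Tfin_mem hy
      set lam : ℤ → ℕ :=
        fun a => if h : a ∈ A then r - μ ((A.orderIsoOfFin hAcard).symm ⟨a, h⟩) else 0 with hlamdef
      have hlb : ∀ i, lam (b i) = r - μ i := by
        intro i
        have hmem := hbmem i
        simp only [hlamdef]
        rw [dif_pos hmem]
        congr 1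
        have hio : (A.orderIsoOfFin hAcard) i = ⟨b i, hmem⟩ := by
          apply Subtype.ext
          exact A.coe_orderIsoOfFin_apply hAcard i
        rw [← hio, OrderIso.symm_apply_apply]
      refine ⟨lam, ?_, ?_, ?_, ?_⟩
      · intro a; simp only [hlamdef]; split <;> omega
      · intro a ha; simp only [hlamdef]; rw [dif_neg ha]
      · rw [hAsumN (fun a => lam a)]
        have h7 : ∑ i, lam (b i) = ∑ i, (r - μ i) :=
          Finset.sum_congr rfl fun i _ => hlb i
        have h8 : ∑ i, (r - μ i : ℕ) + ∑ i, μ i = k * r := by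
          rw [← Finset.sum_add_distrib]
          have he : ∀ i : Fin k, (r - μ i) + μ i = r := fun i => by have := hfe.1 i; omega
          rw [Finset.sum_congr rfl (fun i _ => he i)]; simp [mul_comm]
        have h9 := hfe.2
        omega
      · rw [hAsumZ (fun a => (lam a : ℤ) * a)]
        have he : ∀ i : Fin k, (lam (b i) : ℤ) * b i
            = (r : ℤ) * b i - (μ i : ℤ) * b i := by
          intro i
          rw [hlb i]
          have h15 := hfe.1 i
          push_cast [Nat.cast_sub h15]
          ring
        rw [Finset.sum_congr rfl (fun i _ => he i), Finset.sum_sub_distrib]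
        rw [← hV]
        unfold Vb
        have h13 : R = ∑ i, (r : ℤ) * b i := hAsumZ (fun a => (r : ℤ) * a)
        rw [← h13]
  have hcardT : (Tfin r (k * r - α) b).card
      = Mo (lamStar r (m * r - α) (m - 1) : Fin k → ℕ) + 1 := by
    have h1 : (SubseqSums r A α).ncard = (Tfin r (k * r - α) b).card := by
      rw [hset, Set.ncard_image_of_injective _ sub_right_injective, Set.ncard_coe_finset]
    rw [h1] at heq
    exact heq.trans hmain
  -- rigidity: equal model values give equal values
  have hrigid : ∀ {μ ν : Fin k → ℕ}, Feas r (k * r - α) μ → Feas r (k * r - α) ν →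
      Mo μ = Mo ν → Mo μ ≤ k → Vb b μ = Vb b ν := by
    intro μ ν h1 h2 h3 h4
    exact rigid hb hbpos hr hβ2 hβlt ht0 hc1 hcr hcβ hcardT h1 h2 h3
      (le_trans h4 (B_ge_k hr ht0 hc1))
  -- the basic relations
  have hrel1 : ∀ (j : ℕ) (h1 : 1 ≤ j) (h2 : j + 1 < k),
      b ⟨0, hk0⟩ + b ⟨j, by omega⟩ = b ⟨j + 1, h2⟩ := by
    intro j h1 h2
    have hpq : (⟨0, hk0⟩ : Fin k) ≠ ⟨j, by omega⟩ :=
      Fin.ne_of_val_ne (by show 0 ≠ j; omega)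
    have hmo : Mo (pairv (⟨0, hk0⟩ : Fin k) ⟨j, by omega⟩) = Mo (sing (⟨j + 1, h2⟩ : Fin k)) := by
      rw [Mo_pairv, Mo_sing]; simp; omega
    have hmoB : Mo (pairv (⟨0, hk0⟩ : Fin k) ⟨j, by omega⟩) ≤ k := by
      rw [Mo_pairv]; simp; omega
    have := hrigid (feas_pairv hr hβ2 _ _ hpq) (feas_sing hr (by omega) _) hmo hmoB
    rw [Vb_pairv, Vb_sing] at this
    exact this
  have hrel2 : b ⟨0, hk0⟩ + b ⟨3, by omega⟩ = b ⟨1, by omega⟩ + b ⟨2, by omega⟩ := by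
    have hpq1 : (⟨0, hk0⟩ : Fin k) ≠ ⟨3, by omega⟩ :=
      Fin.ne_of_val_ne (by show (0 : ℕ) ≠ 3; omega)
    have hpq2 : (⟨1, by omega⟩ : Fin k) ≠ ⟨2, by omega⟩ :=
      Fin.ne_of_val_ne (by show (1 : ℕ) ≠ 2; omega)
    have hmo : Mo (pairv (⟨0, hk0⟩ : Fin k) ⟨3, by omega⟩)
        = Mo (pairv (⟨1, by omega⟩ : Fin k) ⟨2, by omega⟩) := by
      rw [Mo_pairv, Mo_pairv]; simp
    have hmoB : Mo (pairv (⟨0, hk0⟩ : Fin k) ⟨3, by omega⟩) ≤ k := by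
      rw [Mo_pairv]; simp; omega
    have := hrigid (feas_pairv hr hβ2 _ _ hpq1) (feas_pairv hr hβ2 _ _ hpq2) hmo hmoB
    rw [Vb_pairv, Vb_pairv] at this
    exact this
  have hb1 : b ⟨1, by omega⟩ = 2 * b ⟨0, hk0⟩ := by
    have h3 := hrel1 2 (by omega) (by omega)
    have h4 : (⟨2 + 1, by omega⟩ : Fin k) = ⟨3, by omega⟩ := rfl
    rw [h4] at h3
    linarith [hrel2, h3]
  have hlin : ∀ (j : ℕ) (hj : j < k), b ⟨j, hj⟩ = ((j : ℤ) + 1) * b ⟨0, hk0⟩ := by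
    intro j
    induction j with
    | zero => intro hj; push_cast; ring_nf
    | succ j ih =>
      intro hj
      rcases Nat.eq_zero_or_pos j with h0 | h1
      · subst h0
        rw [hb1]; push_cast; ring
      · have hr1 := hrel1 j h1 hj
        rw [ih (by omega)] at hr1
        rw [← hr1]; push_cast; ring
  refine ⟨b ⟨0, hk0⟩, hbpos _, ?_⟩
  rw [hAimg]
  ext x
  simp only [Finset.mem_image, Finset.mem_univ, true_and, Finset.mem_Icc]
  constructor
  · rintro ⟨i, rfl⟩
    refine ⟨((i : ℕ) : ℤ) + 1, ⟨by omega, ?_⟩, ?_⟩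
    · have := i.isLt; omega
    · have h5 := hlin i.val i.isLt
      have h6 : (⟨i.val, i.isLt⟩ : Fin k) = i := by apply Fin.ext; rfl
      rw [h6] at h5
      rw [h5]; ring
  · rintro ⟨n, ⟨hn1, hnk⟩, rfl⟩
    have hn : n.toNat - 1 < k := by omega
    refine ⟨⟨n.toNat - 1, hn⟩, ?_⟩
    rw [hlin _ hn]
    have h7 : ((n.toNat - 1 : ℕ) : ℤ) + 1 = n := by omega
    rw [h7]; ring
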